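/- Let X be a compactum and let f ∈ DX. Then the functional nX(f) : C(X) → ℝ defined by nX(f)(φ) = max{f(x) + φ(x) : x ∈ X} is well defined (the maximum is attained and finite) and is an idempotent measure on X, i.e. nX(f) ∈ IX. -/

import Mathlib

/-- An idempotent (Maslov) probability measure on `X`:
a functional on `C(X, ℝ)` preserving constants, translation by constants,
and finite maxima. -/
def IsIdempotentMeasure {X : Type*} [TopologicalSpace X] (μ : C(X, ℝ) → ℝ) : Prop :=
  μ 1 = 1 ∧
  (∀ (l : ℝ) (φ : C(X, ℝ)), μ (ContinuousMap.const X l + φ) = l + μ φ) ∧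
  (∀ ψ φ : C(X, ℝ), μ (ψ ⊔ φ) = max (μ ψ) (μ φ))
/-- Membership in `DX`: an upper semicontinuous function `X → [-∞, 0]`
attaining the maximal value `0`. -/
def MemD {X : Type*} [TopologicalSpace X] (f : X → EReal) : Prop :=
  UpperSemicontinuous f ∧ (∀ x, f x ≤ 0) ∧ ∃ x, f x = 0

/-- Upper semicontinuous `EReal`-valued functions attain their maximum
on a nonempty compact space. -/
lemma usc_exists_max {X : Type*} [TopologicalSpace X] [CompactSpace X] [Nonempty X]
    (g : X → EReal) (hg : UpperSemicontinuous g) : ∃ x₀, ∀ x, g x ≤ g x₀ := by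
  by_contra h
  push_neg at h
  have hne : (Set.univ ∩ ⋂ y : X, g ⁻¹' Set.Ici (g y)).Nonempty := by
    apply IsCompact.inter_iInter_nonempty isCompact_univ
      (fun y : X => g ⁻¹' Set.Ici (g y)) (fun y => hg.isClosed_preimage _)
    intro t
    rcases t.eq_empty_or_nonempty with rfl | ht
    · simp [Set.univ_nonempty]
    · obtain ⟨b, hb, hmax⟩ := t.exists_max_image g ht
      exact ⟨b, by simpa using fun y hy => hmax y hy⟩
  obtain ⟨x₀, -, hx₀⟩ := hne
  simp only [Set.mem_iInter, Set.mem_preimage, Set.mem_Ici] at hx₀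
  obtain ⟨x, hx⟩ := h x₀
  exact absurd (hx₀ x) (not_le.mpr hx)

/-- The maximum of `f x + φ x` is attained and finite. -/
lemma key_max {X : Type*} [TopologicalSpace X] [CompactSpace X]
    (f : X → EReal) (hU : UpperSemicontinuous f)
    (x₁ : X) (hx₁ : f x₁ = 0) (φ : C(X, ℝ)) :
    ∃ x₀ : X, (∀ x, f x + (φ x : EReal) ≤ f x₀ + (φ x₀ : EReal)) ∧
      f x₀ + (φ x₀ : EReal) ≠ ⊥ := by
  have : Nonempty X := ⟨x₁⟩
  have hc : UpperSemicontinuous (fun x => ((φ x : EReal))) :=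
    (continuous_coe_real_ereal.comp φ.continuous).upperSemicontinuous
  have hg : UpperSemicontinuous (fun x => f x + (φ x : EReal)) := by
    apply hU.add' hc
    intro x
    exact EReal.continuousAt_add (by simp) (by simp)
  obtain ⟨x₀, hx₀⟩ := usc_exists_max _ hg
  refine ⟨x₀, hx₀, ?_⟩
  intro hbot
  have h1 : f x₁ + (φ x₁ : EReal) ≤ ⊥ := hbot ▸ hx₀ x₁
  rw [hx₁, zero_add] at h1
  exact (EReal.coe_ne_bot _) (le_bot_iff.mp h1)

/-- Representation of the supremum as a real number. -/
lemma key_repr {X : Type*} [TopologicalSpace X] [CompactSpace X]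
    (f : X → EReal) (hU : UpperSemicontinuous f) (hle : ∀ x, f x ≤ 0)
    (x₁ : X) (hx₁ : f x₁ = 0) (φ : C(X, ℝ)) :
    ∃ (x₀ : X) (r : ℝ), f x₀ = (r : EReal) ∧
      (∀ x, f x + (φ x : EReal) ≤ f x₀ + (φ x₀ : EReal)) ∧
      (⨆ x, f x + (φ x : EReal)) = ((r + φ x₀ : ℝ) : EReal) := by
  obtain ⟨x₀, hmax, hbot⟩ := key_max f hU x₁ hx₁ φ
  have hfb : f x₀ ≠ ⊥ := by
    intro h; exact hbot (by rw [h, EReal.bot_add])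
  have hft : f x₀ ≠ ⊤ := ne_top_of_le_ne_top (by simp) (hle x₀)
  refine ⟨x₀, (f x₀).toReal, (EReal.coe_toReal hft hfb).symm, hmax, ?_⟩
  have hsup : (⨆ x, f x + (φ x : EReal)) = f x₀ + (φ x₀ : EReal) :=
    le_antisymm (iSup_le hmax) (le_iSup (fun x => f x + (φ x : EReal)) x₀)
  rw [hsup, EReal.coe_add, EReal.coe_toReal hft hfb]

/-- For a compactum `X` and `f ∈ DX`, the functional
`nX(f)(φ) = max{f(x) + φ(x) : x ∈ X}` is well defined (the maximum is attained and
finite) and is an idempotent measure on `X`. -/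
theorem stmt0 {X : Type*} [TopologicalSpace X] [CompactSpace X] [T2Space X]
    (f : X → EReal) (hf : MemD f) :
    (∀ φ : C(X, ℝ), ∃ x₀ : X,
        (∀ x, f x + (φ x : EReal) ≤ f x₀ + (φ x₀ : EReal)) ∧
        f x₀ + (φ x₀ : EReal) ≠ ⊥) ∧
    IsIdempotentMeasure (fun φ : C(X, ℝ) => (⨆ x, f x + (φ x : EReal)).toReal) := by
  obtain ⟨hU, hle, x₁, hx₁⟩ := hf
  refine ⟨fun φ => key_max f hU x₁ hx₁ φ, ?_, ?_, ?_⟩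
  · -- μ 1 = 1
    have h1 : (⨆ x, f x + (((1 : C(X, ℝ)) x : ℝ) : EReal)) = (1 : EReal) := by
      apply le_antisymm
      · apply iSup_le
        intro x
        simp only [ContinuousMap.one_apply, EReal.coe_one]
        calc f x + 1 ≤ 0 + 1 := add_le_add_left (hle x) 1
        _ = 1 := zero_add 1
      · have := le_iSup (fun x => f x + (((1 : C(X, ℝ)) x : ℝ) : EReal)) x₁
        simpa [hx₁] using this
    show (⨆ x, f x + (((1 : C(X, ℝ)) x : ℝ) : EReal)).toReal = 1
    rw [h1, EReal.toReal_one]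
  · -- translation
    intro l φ
    obtain ⟨x₀, r, hr, hmax, hsup⟩ := key_repr f hU hle x₁ hx₁ φ
    have hsupl : (⨆ x, f x + (((ContinuousMap.const X l + φ) x : ℝ) : EReal))
        = ((l + (r + φ x₀) : ℝ) : EReal) := by
      have hcoe : ∀ x : X, (((ContinuousMap.const X l + φ) x : ℝ) : EReal)
          = (l : EReal) + (φ x : EReal) := by
        intro x
        simp [ContinuousMap.add_apply, EReal.coe_add]
      apply le_antisymm
      · apply iSup_le
        intro x
        rw [hcoe x, EReal.coe_add, EReal.coe_add, add_left_comm]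
        refine add_le_add_right ?_ (l : EReal)
        calc f x + (φ x : EReal) ≤ f x₀ + (φ x₀ : EReal) := hmax x
        _ = ((r + φ x₀ : ℝ) : EReal) := by rw [hr, EReal.coe_add]
      · have := le_iSup (fun x => f x + (((ContinuousMap.const X l + φ) x : ℝ) : EReal)) x₀
        refine le_trans (le_of_eq ?_) this
        rw [hcoe x₀, hr]
        push_cast
        rw [add_left_comm]
    simp only [hsupl, hsup, EReal.toReal_coe]
  · -- finite maxima
    intro ψ φ
    obtain ⟨xψ, rψ, hrψ, hmaxψ, hsupψ⟩ := key_repr f hU hle x₁ hx₁ ψ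
    obtain ⟨xφ, rφ, hrφ, hmaxφ, hsupφ⟩ := key_repr f hU hle x₁ hx₁ φ
    have hsupm : (⨆ x, f x + (((ψ ⊔ φ) x : ℝ) : EReal))
        = ((max (rψ + ψ xψ) (rφ + φ xφ) : ℝ) : EReal) := by
      have hcm : ∀ a b : ℝ, ((max a b : ℝ) : EReal) = max (a : EReal) (b : EReal) :=
        fun a b => EReal.coe_strictMono.monotone.map_max
      have hcoe : ∀ x : X, (((ψ ⊔ φ) x : ℝ) : EReal)
          = max ((ψ x : ℝ) : EReal) ((φ x : ℝ) : EReal) := by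
        intro x
        rw [ContinuousMap.sup_apply]
        exact EReal.coe_strictMono.monotone.map_max
      apply le_antisymm
      · apply iSup_le
        intro x
        rw [hcoe x, ← max_add_add_left, hcm]
        refine max_le_max ?_ ?_
        · calc f x + (ψ x : EReal) ≤ f xψ + (ψ xψ : EReal) := hmaxψ x
          _ = ((rψ + ψ xψ : ℝ) : EReal) := by rw [hrψ, EReal.coe_add]
        · calc f x + (φ x : EReal) ≤ f xφ + (φ xφ : EReal) := hmaxφ x
          _ = ((rφ + φ xφ : ℝ) : EReal) := by rw [hrφ, EReal.coe_add]
      · rw [hcm]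
        apply max_le
        · refine le_trans ?_ (le_iSup (fun x => f x + (((ψ ⊔ φ) x : ℝ) : EReal)) xψ)
          rw [hcoe xψ, hrψ, EReal.coe_add]
          exact add_le_add_right (le_max_left _ _) _
        · refine le_trans ?_ (le_iSup (fun x => f x + (((ψ ⊔ φ) x : ℝ) : EReal)) xφ)
          rw [hcoe xφ, hrφ, EReal.coe_add]
          exact add_le_add_right (le_max_right _ _) _
    simp only [hsupm, hsupψ, hsupφ, EReal.toReal_coe]
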